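/- Let d be a positive integer with d < (1−1/q̂_a)·n, and let r be a positive integer with r < J_{q̂_a}(d/n)·n. Then every code C ⊆ Q with minimum distance d satisfies |C| ≤ (|Q|/s_r) · (q̂_a−1)·n·d / (q̂_a·r² − (q̂_a−1)·(2r−d)·n). -/

import Mathlib

/-- The Hamming weight of `x ∈ Q = ∏ i, ℤ/q_iℤ`: the number of coordinates `i`
with `x i ≠ 0`. -/
def mwt {n : ℕ} {q : Fin n → ℕ} (x : ∀ i, ZMod (q i)) : ℕ :=
  (Finset.univ.filter (fun i => x i ≠ 0)).card

/-- `sph q r` is `s_r`, the number of `x ∈ Q` with `wt(x) = r`. -/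
noncomputable def sph {n : ℕ} (q : Fin n → ℕ) (r : ℕ) : ℕ :=
  Nat.card {x : ∀ i, ZMod (q i) // mwt x = r}

/-- The arithmetic mean `q̂_a = (1/n) ∑ q_i` of the alphabet sizes. -/
noncomputable def qa {n : ℕ} (q : Fin n → ℕ) : ℝ :=
  (∑ i : Fin n, (q i : ℝ)) / n

/-- The Johnson radius `J_q(δ) = (1 - 1/q)(1 - √(1 - δ/(1 - 1/q)))`. -/
noncomputable def Jrad (qv δ : ℝ) : ℝ :=
  (1 - 1 / qv) * (1 - Real.sqrt (1 - δ / (1 - 1 / qv)))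

set_option maxHeartbeats 1000000 in
private lemma johnson_aux (n : ℕ) (hn : 1 ≤ n) (q : Fin n → ℕ) (hq : ∀ i, 2 ≤ q i)
    (hNZ : ∀ i, NeZero (q i))
    (d : ℕ) (hd : 0 < d) (r : ℕ) (hr : 0 < r)
    (B : Finset (∀ i, ZMod (q i))) (y : ∀ i, ZMod (q i))
    (hBd : ∀ c ∈ B, ∀ c' ∈ B, c ≠ c' → d ≤ mwt (c - c'))
    (hBr : ∀ c ∈ B, mwt (c - y) = r)
    (hQa2 : (2:ℝ) ≤ qa q)
    (hP : 0 < qa q * (r : ℝ) ^ 2 - (qa q - 1) * (2 * (r : ℝ) - d) * n) :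
    (B.card : ℝ) ≤ (qa q - 1) * n * d
      / (qa q * (r : ℝ) ^ 2 - (qa q - 1) * (2 * (r : ℝ) - d) * n) := by
  classical
  have hn0 : (0:ℝ) < n := by exact_mod_cast hn
  set M := B.card with hM
  rcases Nat.eq_zero_or_pos M with hM0 | hMpos
  · rw [hM0]
    push_cast
    apply div_nonneg _ hP.le
    have h1 : (0:ℝ) ≤ qa q - 1 := by linarith
    have h2 : (0:ℝ) ≤ (d:ℝ) := Nat.cast_nonneg d
    positivity
  set m : (i : Fin n) → ZMod (q i) → ℕ := fun i a => (B.filter fun c => c i = a).card with hm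
  set sc : Fin n → ℕ := fun i => (B.filter fun c => c i ≠ y i).card with hsc
  -- weight as a sum of indicators
  have hmw : ∀ c c' : ∀ i, ZMod (q i), mwt (c - c') = ∑ i, if c i ≠ c' i then 1 else 0 := by
    intro c c'
    rw [mwt, Finset.card_filter]
    apply Finset.sum_congr rfl
    intro i _
    simp [Pi.sub_apply, sub_ne_zero]
  -- (N1) lower bound on sum of pairwise distances
  have hlow : M * (M - 1) * d ≤ ∑ c ∈ B, ∑ c' ∈ B, mwt (c - c') := by
    have inner : ∀ c ∈ B, (M - 1) * d ≤ ∑ c' ∈ B, mwt (c - c') := by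
      intro c hc
      calc (M - 1) * d = ∑ _c' ∈ B.erase c, d := by
            rw [Finset.sum_const, smul_eq_mul, Finset.card_erase_of_mem hc]
      _ ≤ ∑ c' ∈ B.erase c, mwt (c - c') := by
            apply Finset.sum_le_sum
            intro c' hc'
            exact hBd c hc c' (Finset.mem_of_mem_erase hc')
              (Ne.symm (Finset.ne_of_mem_erase hc'))
      _ ≤ ∑ c' ∈ B, mwt (c - c') := by
            apply Finset.sum_le_sum_of_subset (Finset.erase_subset _ _)
    calc M * (M - 1) * d = ∑ _c ∈ B, (M - 1) * d := by
          rw [Finset.sum_const, smul_eq_mul, ← hM, mul_assoc]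
    _ ≤ _ := Finset.sum_le_sum inner
  -- (N3) diagonal counting
  have hEq : ∀ i, (∑ c ∈ B, ∑ c' ∈ B, if c i = c' i then 1 else 0)
      = ∑ a : ZMod (q i), (m i a)^2 := by
    intro i
    have h1 : ∀ c ∈ B, (∑ c' ∈ B, if c i = c' i then 1 else 0) = m i (c i) := by
      intro c _
      rw [hm]
      simp only []
      rw [Finset.card_filter]
      apply Finset.sum_congr rfl
      intro c' _
      simp [eq_comm]
    rw [Finset.sum_congr rfl h1]
    have h2 := Finset.sum_fiberwise B (fun c => c i) (fun c => m i (c i))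
    rw [← h2]
    apply Finset.sum_congr rfl
    intro a _
    have h3 : ∀ c ∈ B.filter (fun c => c i = a), m i (c i) = m i a := by
      intro c hc
      rw [(Finset.mem_filter.1 hc).2]
    rw [Finset.sum_congr rfl h3, Finset.sum_const, smul_eq_mul, sq]
  -- (N4) combination
  have hcomb : (∑ c ∈ B, ∑ c' ∈ B, mwt (c - c'))
      + ∑ i, ∑ a : ZMod (q i), (m i a)^2 = n * M^2 := by
    have h1 : (∑ c ∈ B, ∑ c' ∈ B, mwt (c - c'))
        = ∑ i, ∑ c ∈ B, ∑ c' ∈ B, if c i ≠ c' i then 1 else 0 := by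
      simp_rw [hmw]
      rw [show (∑ c ∈ B, ∑ c' ∈ B, ∑ i : Fin n, if c i ≠ c' i then 1 else 0)
          = ∑ c ∈ B, ∑ i : Fin n, ∑ c' ∈ B, (if c i ≠ c' i then 1 else 0) from
        Finset.sum_congr rfl (fun c _ => Finset.sum_comm)]
      exact Finset.sum_comm
    rw [h1, ← Finset.sum_add_distrib]
    have h2 : ∀ i : Fin n, ((∑ c ∈ B, ∑ c' ∈ B, if c i ≠ c' i then 1 else 0)
        + ∑ a : ZMod (q i), (m i a)^2) = M^2 := by
      intro i
      rw [← hEq i, ← Finset.sum_add_distrib]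
      have h3 : ∀ c ∈ B, ((∑ c' ∈ B, if c i ≠ c' i then 1 else 0)
          + ∑ c' ∈ B, if c i = c' i then 1 else 0) = M := by
        intro c _
        rw [← Finset.sum_add_distrib]
        have h4 : ∀ c' ∈ B, ((if c i ≠ c' i then 1 else 0)
            + if c i = c' i then 1 else 0) = 1 := by
          intro c' _
          by_cases h : c i = c' i <;> simp [h]
        rw [Finset.sum_congr rfl h4, Finset.sum_const, smul_eq_mul, mul_one]
      rw [Finset.sum_congr rfl h3, Finset.sum_const, smul_eq_mul, sq]
    rw [Finset.sum_congr rfl (fun i _ => h2 i), Finset.sum_const, smul_eq_mul,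
      Finset.card_univ, Fintype.card_fin]
  -- (N5) column sums
  have hsum_s : ∑ i, sc i = M * r := by
    have h1 : ∀ i : Fin n, sc i = ∑ c ∈ B, if c i ≠ y i then 1 else 0 := by
      intro i
      rw [hsc]
      exact Finset.card_filter _ _
    rw [Finset.sum_congr rfl (fun i _ => h1 i), Finset.sum_comm]
    have h2 : ∀ c ∈ B, (∑ i, if c i ≠ y i then 1 else 0) = r := by
      intro c hc
      rw [← hmw c y, hBr c hc]
    rw [Finset.sum_congr rfl h2, Finset.sum_const, smul_eq_mul]
  -- (N6) per-coordinate lower bound on the diagonal term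
  have hscM : ∀ i, sc i ≤ M := fun i => Finset.card_filter_le _ _
  have hNi : ∀ i : Fin n, ((M:ℝ) - sc i)^2 + (sc i:ℝ)^2/((q i:ℝ)-1)
      ≤ ∑ a : ZMod (q i), ((m i a : ℕ):ℝ)^2 := by
    intro i
    have hq1 : (1:ℝ) < (q i : ℝ) := by exact_mod_cast (hq i)
    have hmy : m i (y i) + sc i = M := by
      rw [hm, hsc]
      exact Finset.card_filter_add_card_filter_not _
    have hmyR : ((m i (y i) : ℕ):ℝ) = (M:ℝ) - sc i := by
      have : (m i (y i) : ℝ) + (sc i : ℝ) = (M:ℝ) := by exact_mod_cast congrArg (Nat.cast (R := ℝ)) hmy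
      linarith
    have hsplit : (∑ a : ZMod (q i), ((m i a : ℕ):ℝ)^2)
        = ((m i (y i):ℕ):ℝ)^2 + ∑ a ∈ Finset.univ.erase (y i), ((m i a : ℕ):ℝ)^2 :=
      (Finset.add_sum_erase _ _ (Finset.mem_univ (y i))).symm
    have hfib : ∑ a ∈ Finset.univ.erase (y i), m i a = sc i := by
      have hmap : ∀ c ∈ B.filter (fun c => c i ≠ y i), c i ∈ Finset.univ.erase (y i) :=
        fun c hc => Finset.mem_erase.2 ⟨(Finset.mem_filter.1 hc).2, Finset.mem_univ _⟩
      have h5 := Finset.card_eq_sum_card_fiberwise hmap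
      rw [hsc]
      simp only []
      rw [h5]
      symm
      apply Finset.sum_congr rfl
      intro a ha
      rw [Finset.filter_filter]
      congr 1
      apply Finset.filter_congr
      intro c _
      have hay : a ≠ y i := (Finset.mem_erase.1 ha).1
      constructor
      · exact fun h => h.2
      · exact fun h => ⟨by rw [h]; exact hay, h⟩
    have hcard : ((Finset.univ.erase (y i)).card : ℝ) = (q i : ℝ) - 1 := by
      rw [Finset.card_erase_of_mem (Finset.mem_univ _), Finset.card_univ, ZMod.card]
      have : 1 ≤ q i := by have := hq i; omega
      push_cast [this]
      ring
    have hCS : ((sc i : ℝ))^2 ≤ ((q i:ℝ) - 1) * ∑ a ∈ Finset.univ.erase (y i), ((m i a:ℕ):ℝ)^2 := by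
      have := sq_sum_le_card_mul_sum_sq
        (s := Finset.univ.erase (y i)) (f := fun a => ((m i a : ℕ):ℝ))
      rw [hcard] at this
      have hss : (∑ a ∈ Finset.univ.erase (y i), ((m i a:ℕ):ℝ)) = (sc i : ℝ) := by
        exact_mod_cast congrArg (Nat.cast (R := ℝ)) hfib
      rwa [hss] at this
    have hq1' : (0:ℝ) < (q i:ℝ) - 1 := by linarith
    rw [hsplit, hmyR]
    have : (sc i:ℝ)^2/((q i:ℝ)-1) ≤ ∑ a ∈ Finset.univ.erase (y i), ((m i a:ℕ):ℝ)^2 := by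
      rw [div_le_iff₀ hq1']
      linarith [hCS]
    linarith
  -- real versions
  set Q := qa q with hQdef
  have hQ0 : (0:ℝ) < Q := by linarith
  have hQ1 : (1:ℝ) < Q := by linarith
  have hMR : (1:ℝ) ≤ (M:ℝ) := by exact_mod_cast hMpos
  -- cast of hlow and hcomb
  have hlowR : (M:ℝ) * ((M:ℝ) - 1) * d ≤ ∑ c ∈ B, ∑ c' ∈ B, (mwt (c - c') : ℝ) := by
    have h1 : ((M * (M-1) * d : ℕ) : ℝ) ≤ ((∑ c ∈ B, ∑ c' ∈ B, mwt (c - c') : ℕ) : ℝ) := by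
      exact_mod_cast hlow
    push_cast [Nat.cast_sub hMpos] at h1
    linarith [h1]
  have hcombR : (∑ c ∈ B, ∑ c' ∈ B, (mwt (c - c') : ℝ))
      + ∑ i, ∑ a : ZMod (q i), ((m i a : ℕ):ℝ)^2 = (n:ℝ) * (M:ℝ)^2 := by
    exact_mod_cast congrArg (Nat.cast (R := ℝ)) hcomb
  have hsum_sR : ∑ i, ((sc i : ℕ):ℝ) = (M:ℝ) * r := by
    exact_mod_cast congrArg (Nat.cast (R := ℝ)) hsum_s
  -- main inequality with the w_i
  have hmain : (M:ℝ) * ((M:ℝ) - 1) * d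
      ≤ 2 * (M:ℝ)^2 * r - ∑ i, ((sc i:ℕ):ℝ)^2 * (q i) / ((q i:ℝ) - 1) := by
    have h1 : ∑ i, (((M:ℝ) - sc i)^2 + (sc i:ℝ)^2/((q i:ℝ)-1))
        ≤ ∑ i, ∑ a : ZMod (q i), ((m i a:ℕ):ℝ)^2 :=
      Finset.sum_le_sum (fun i _ => hNi i)
    have h2 : (M:ℝ) * ((M:ℝ) - 1) * d
        ≤ (n:ℝ) * (M:ℝ)^2 - ∑ i, (((M:ℝ) - sc i)^2 + (sc i:ℝ)^2/((q i:ℝ)-1)) := by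
      linarith [hlowR, hcombR, h1]
    have h3 : (n:ℝ) * (M:ℝ)^2 - ∑ i, (((M:ℝ) - sc i)^2 + (sc i:ℝ)^2/((q i:ℝ)-1))
        = 2 * (M:ℝ)^2 * r - ∑ i, ((sc i:ℕ):ℝ)^2 * (q i) / ((q i:ℝ) - 1) := by
      have h4 : (n:ℝ) * (M:ℝ)^2 = ∑ _i : Fin n, (M:ℝ)^2 := by
        rw [Finset.sum_const, Finset.card_univ, Fintype.card_fin, nsmul_eq_mul]
      rw [h4, ← Finset.sum_sub_distrib]
      have h5 : ∀ i : Fin n, (M:ℝ)^2 - (((M:ℝ) - sc i)^2 + (sc i:ℝ)^2/((q i:ℝ)-1))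
          = 2 * (M:ℝ) * (sc i) - ((sc i:ℕ):ℝ)^2 * (q i) / ((q i:ℝ) - 1) := by
        intro i
        have hq1 : (1:ℝ) < (q i : ℝ) := by exact_mod_cast (hq i)
        have hq1' : ((q i:ℝ) - 1) ≠ 0 := by linarith
        field_simp
        ring
      rw [Finset.sum_congr rfl (fun i _ => h5 i), Finset.sum_sub_distrib, ← Finset.mul_sum,
        hsum_sR]
      ring
    linarith [h2, h3.le, h3.ge]
  -- Sedrakyan / Cauchy-Schwarz with weights
  have hgpos : ∀ i ∈ (Finset.univ : Finset (Fin n)), (0:ℝ) < ((q i:ℝ) - 1)/(q i) := by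
    intro i _
    have hq1 : (2:ℝ) ≤ (q i : ℝ) := by exact_mod_cast (hq i)
    apply div_pos <;> linarith
  have hSed := Finset.sq_sum_div_le_sum_sq_div Finset.univ (fun i => ((sc i:ℕ):ℝ)) hgpos
  have hSed' : ((M:ℝ) * r)^2 / (∑ i, ((q i:ℝ) - 1)/(q i))
      ≤ ∑ i, ((sc i:ℕ):ℝ)^2 * (q i) / ((q i:ℝ) - 1) := by
    rw [hsum_sR] at hSed
    have h6 : ∀ i : Fin n, ((sc i:ℕ):ℝ)^2 / (((q i:ℝ) - 1)/(q i))
        = ((sc i:ℕ):ℝ)^2 * (q i) / ((q i:ℝ) - 1) := by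
      intro i
      rw [div_div_eq_mul_div]
    calc ((M:ℝ) * r)^2 / (∑ i, ((q i:ℝ) - 1)/(q i))
        ≤ ∑ i, ((sc i:ℕ):ℝ)^2 / (((q i:ℝ) - 1)/(q i)) := hSed
    _ = _ := Finset.sum_congr rfl (fun i _ => h6 i)
  -- AM-HM : sum of (q-1)/q is at most n(Q-1)/Q
  have hQn : (∑ i, (q i:ℝ)) = Q * n := by
    rw [hQdef, qa]
    field_simp
  have hAMHM : (n:ℝ)/Q ≤ ∑ i, 1/(q i:ℝ) := by
    have hqpos : ∀ i ∈ (Finset.univ : Finset (Fin n)), (0:ℝ) < (q i:ℝ) := by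
      intro i _
      have : (2:ℝ) ≤ (q i : ℝ) := by exact_mod_cast (hq i)
      linarith
    have h7 := Finset.sq_sum_div_le_sum_sq_div Finset.univ (fun _ => (1:ℝ)) hqpos
    simp only [one_pow] at h7
    rw [Finset.sum_const, Finset.card_univ, Fintype.card_fin, nsmul_eq_mul, mul_one, hQn] at h7
    calc (n:ℝ)/Q = (n:ℝ)^2/(Q * n) := by
          field_simp
    _ ≤ ∑ i, 1/(q i:ℝ) := h7
  have hgsum_le : (∑ i, ((q i:ℝ) - 1)/(q i)) ≤ (n:ℝ)*(Q-1)/Q := by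
    have h8 : ∀ i : Fin n, ((q i:ℝ) - 1)/(q i) = 1 - 1/(q i:ℝ) := by
      intro i
      have : (q i:ℝ) ≠ 0 := by
        have : (2:ℝ) ≤ (q i : ℝ) := by exact_mod_cast (hq i)
        linarith
      field_simp
    rw [Finset.sum_congr rfl (fun i _ => h8 i), Finset.sum_sub_distrib, Finset.sum_const,
      Finset.card_univ, Fintype.card_fin, nsmul_eq_mul, mul_one]
    have : (n:ℝ)*(Q-1)/Q = n - n/Q := by
      field_simp
    rw [this]
    linarith [hAMHM]
  have hgsum_pos : (0:ℝ) < ∑ i, ((q i:ℝ) - 1)/(q i) := by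
    haveI : Nonempty (Fin n) := ⟨⟨0, by omega⟩⟩
    exact Finset.sum_pos hgpos Finset.univ_nonempty
  -- lower bound on the weighted sum
  have hw_lb : (M:ℝ)^2*(r:ℝ)^2*Q/((Q-1)*n) ≤ ∑ i, ((sc i:ℕ):ℝ)^2 * (q i) / ((q i:ℝ) - 1) := by
    have h9 : (0:ℝ) < (n:ℝ)*(Q-1)/Q := by
      apply div_pos _ hQ0
      nlinarith
    have h10 : ((M:ℝ) * r)^2 / ((n:ℝ)*(Q-1)/Q) ≤ ((M:ℝ) * r)^2 / (∑ i, ((q i:ℝ) - 1)/(q i)) :=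
      div_le_div_of_nonneg_left (sq_nonneg _) hgsum_pos hgsum_le
    have h11 : ((M:ℝ) * r)^2 / ((n:ℝ)*(Q-1)/Q) = (M:ℝ)^2*(r:ℝ)^2*Q/((Q-1)*n) := by
      rw [div_div_eq_mul_div]
      ring_nf
    rw [← h11]
    exact le_trans h10 (le_trans hSed' (le_refl _))
  -- final algebra
  have hfin : (M:ℝ)*((M:ℝ)-1)*d ≤ 2*(M:ℝ)^2*r - (M:ℝ)^2*(r:ℝ)^2*Q/((Q-1)*n) := by
    linarith [hmain, hw_lb]
  have hD : (0:ℝ) < (Q-1)*n := by nlinarith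
  have h1 : (M:ℝ)*((M:ℝ)-1)*d*((Q-1)*n) ≤ 2*(M:ℝ)^2*r*((Q-1)*n) - (M:ℝ)^2*(r:ℝ)^2*Q := by
    have h12 := mul_le_mul_of_nonneg_right hfin hD.le
    have h13 : (2*(M:ℝ)^2*r - (M:ℝ)^2*(r:ℝ)^2*Q/((Q-1)*n))*((Q-1)*n)
        = 2*(M:ℝ)^2*r*((Q-1)*n) - (M:ℝ)^2*(r:ℝ)^2*Q := by
      rw [sub_mul, div_mul_cancel₀ _ hD.ne']
    linarith [h12, h13.le, h13.ge]
  have h2 : (M:ℝ)^2 * (Q*(r:ℝ)^2 - (Q-1)*(2*(r:ℝ)-d)*n) ≤ (M:ℝ) * ((d:ℝ)*((Q-1)*n)) := by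
    nlinarith [h1]
  have h3 : (M:ℝ) * ((M:ℝ) * (Q*(r:ℝ)^2 - (Q-1)*(2*(r:ℝ)-d)*n) - (d:ℝ)*((Q-1)*n)) ≤ 0 := by
    nlinarith [h2]
  have hMP : (M:ℝ) * (Q*(r:ℝ)^2 - (Q-1)*(2*(r:ℝ)-d)*n) ≤ (d:ℝ)*((Q-1)*n) := by
    nlinarith [h3, hMR]
  rw [le_div_iff₀ hP]
  linarith [hMP]

set_option maxHeartbeats 1000000 in
/-- The Elias-Bassalygo bound for mixed codes: for `0 < d < (1 - 1/q̂_a) n` and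
`0 < r < J_{q̂_a}(d/n) n`, every code `C ⊆ Q` of minimum distance `d` satisfies
`|C| ≤ (|Q|/s_r) (q̂_a - 1) n d / (q̂_a r² - (q̂_a - 1)(2r - d) n)`. -/
theorem stmt12 (n : ℕ) (hn : 1 ≤ n) (q : Fin n → ℕ) (hq : ∀ i, 2 ≤ q i)
    (d : ℕ) (hd : 0 < d) (hdn : (d : ℝ) < (1 - 1 / qa q) * n)
    (r : ℕ) (hr : 0 < r) (hrJ : (r : ℝ) < Jrad (qa q) ((d : ℝ) / n) * n)
    (C : Set (∀ i, ZMod (q i)))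
    (hdist : ∀ x ∈ C, ∀ y ∈ C, x ≠ y → d ≤ mwt (x - y)) :
    (Nat.card C : ℝ)
      ≤ ((Nat.card (∀ i, ZMod (q i)) : ℝ) / sph q r)
          * ((qa q - 1) * n * d
              / (qa q * (r : ℝ) ^ 2 - (qa q - 1) * (2 * (r : ℝ) - d) * n)) := by
  classical
  have hn0 : (0:ℝ) < n := by exact_mod_cast hn
  have hQa2 : (2:ℝ) ≤ qa q := by
    rw [qa, le_div_iff₀ hn0]
    calc (2:ℝ) * n = ∑ _i : Fin n, (2:ℝ) := by simp [mul_comm]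
    _ ≤ ∑ i : Fin n, (q i : ℝ) := by
        apply Finset.sum_le_sum; intro i _; exact_mod_cast hq i
  have hPrn : (0 < qa q * (r : ℝ) ^ 2 - (qa q - 1) * (2 * (r : ℝ) - d) * n) ∧ (r:ℝ) < n := by
    have hn0 : (0:ℝ) < n := by exact_mod_cast hn
    have hQa0 : (0:ℝ) < qa q := by linarith
    set Q := qa q with hQdef
    have hθpos : 0 < 1 - 1/Q := by
      have : 1/Q < 1 := by rw [div_lt_one hQa0]; linarith
      linarith
    have hθlt : 1 - 1/Q < 1 := by
      have : 0 < 1/Q := by positivity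
      linarith
    have hX0 : 0 ≤ 1 - ((d:ℝ)/n)/(1 - 1/Q) := by
      have : ((d:ℝ)/n)/(1 - 1/Q) ≤ 1 := by
        rw [div_le_one hθpos, div_le_iff₀ hn0]
        nlinarith
      linarith
    set s := Real.sqrt (1 - ((d:ℝ)/n)/(1 - 1/Q)) with hsdef
    have hs0 : 0 ≤ s := Real.sqrt_nonneg _
    have hs2 : s^2 = 1 - ((d:ℝ)/n)/(1 - 1/Q) := Real.sq_sqrt hX0
    rw [Jrad] at hrJ
    have hrJ' : (r:ℝ) < (1 - 1/Q) * (1 - s) * n := hrJ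
    constructor
    · have h1 : s * ((1 - 1/Q)*n) < (1 - 1/Q)*n - r := by nlinarith
      have h2 : (s*((1 - 1/Q)*n))^2 < ((1 - 1/Q)*n - r)^2 := by
        have h3 : 0 ≤ s*((1 - 1/Q)*n) := by positivity
        nlinarith
      have h4 : s^2 * (1 - 1/Q) * n = (1 - 1/Q)*n - d := by
        have h6 : (n:ℝ) ≠ 0 := hn0.ne'
        have h5 : 1 - 1/Q ≠ 0 := hθpos.ne'
        have hc : ((d:ℝ)/n)/(1-1/Q) * ((1 - 1/Q) * n) = d := by
          rw [← mul_assoc, div_mul_cancel₀ _ h5, div_mul_cancel₀ _ h6]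
        calc s^2 * (1 - 1/Q) * n = (1 - ((d:ℝ)/n)/(1-1/Q)) * ((1 - 1/Q) * n) := by
              rw [hs2]; ring
        _ = (1 - 1/Q)*n - ((d:ℝ)/n)/(1-1/Q) * ((1 - 1/Q) * n) := by ring
        _ = (1 - 1/Q)*n - d := by rw [hc]
      have key : (1 - 1/Q) * (2*(r:ℝ) - d) * n < (r:ℝ)^2 := by nlinarith [h2, h4, hθpos, hn0]
      have key2 : (Q - 1) * (2*(r:ℝ) - d) * n < Q * (r:ℝ)^2 := by
        calc (Q - 1) * (2*(r:ℝ) - d) * n = Q * ((1 - 1/Q) * (2*(r:ℝ) - d) * n) := by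
              field_simp
        _ < Q * (r:ℝ)^2 := mul_lt_mul_of_pos_left key hQa0
      linarith
    · nlinarith
  obtain ⟨hP, hrn⟩ := hPrn
  haveI hNZ : ∀ i, NeZero (q i) := fun i => ⟨by have := hq i; omega⟩
  have hrn' : r < n := by exact_mod_cast hrn
  -- sph as a filter card
  have hsr_card : sph q r = (Finset.univ.filter (fun x : (∀ i, ZMod (q i)) => mwt x = r)).card := by
    rw [sph, Nat.card_eq_fintype_card, Fintype.card_subtype]
  -- sph positive
  have hsph_pos : 0 < sph q r := by
    rw [hsr_card, Finset.card_pos]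
    refine ⟨(fun i => if (i : ℕ) < r then 1 else 0 : ∀ i, ZMod (q i)), Finset.mem_filter.2 ⟨Finset.mem_univ _, ?_⟩⟩
    have hx : ∀ i : Fin n, ((if (i : ℕ) < r then 1 else 0 : ZMod (q i)) ≠ 0) ↔ (i : ℕ) < r := by
      intro i
      haveI : Fact (1 < q i) := ⟨by have := hq i; omega⟩
      by_cases h : (i : ℕ) < r <;> simp [h]
    rw [mwt]
    have : (Finset.univ.filter fun i : Fin n =>
        (if (i : ℕ) < r then 1 else 0 : ZMod (q i)) ≠ 0)
        = Finset.univ.filter (fun i : Fin n => (i : ℕ) < r) := by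
      apply Finset.filter_congr; intro i _; simpa using hx i
    rw [this]
    have : (Finset.univ.filter (fun i : Fin n => (i : ℕ) < r))
        = Finset.Iio (⟨r, hrn'⟩ : Fin n) := by
      ext i; simp [Finset.mem_Iio, Fin.lt_def]
    rw [this, Fin.card_Iio]
  have hCfin : C.Finite := Set.toFinite C
  set Ct := hCfin.toFinset with hCt
  set f : (∀ i, ZMod (q i)) → ℕ := fun y => (Ct.filter fun c => mwt (c - y) = r).card with hf
  -- double counting
  have hsum : ∑ y : ∀ i, ZMod (q i), f y = Ct.card * sph q r := by
    have h1 : ∀ y, f y = ∑ c ∈ Ct, if mwt (c - y) = r then 1 else 0 := by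
      intro y; rw [hf]; exact Finset.card_filter _ _
    simp only [h1]
    rw [Finset.sum_comm]
    have h2 : ∀ c : ∀ i, ZMod (q i), ∑ y : ∀ i, ZMod (q i), (if mwt (c - y) = r then 1 else 0) = sph q r := by
      intro c
      rw [← Finset.card_filter, hsr_card]
      apply Finset.card_nbij' (fun y => c - y) (fun x => c - x) <;>
        simp [Set.MapsTo, Set.LeftInvOn, Set.RightInvOn, sub_sub_cancel]
    simp only [h2, Finset.sum_const, smul_eq_mul]
  -- choose the best center
  obtain ⟨y, -, hymax⟩ := Finset.exists_max_image (Finset.univ : Finset (∀ i, ZMod (q i))) f ⟨0, Finset.mem_univ 0⟩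
  have havg : Ct.card * sph q r ≤ Fintype.card (∀ i, ZMod (q i)) * f y := by
    rw [← hsum]
    calc ∑ y' : ∀ i, ZMod (q i), f y' ≤ (Finset.univ : Finset (∀ i, ZMod (q i))).card • f y :=
          Finset.sum_le_card_nsmul _ _ _ (fun x _ => hymax x (Finset.mem_univ x))
    _ = Fintype.card (∀ i, ZMod (q i)) * f y := by rw [Finset.card_univ, smul_eq_mul]
  set B := Ct.filter (fun c => mwt (c - y) = r) with hB
  set M := B.card with hM
  -- Johnson bound
  have hJ : (M:ℝ) ≤ (qa q - 1) * n * d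
      / (qa q * (r : ℝ) ^ 2 - (qa q - 1) * (2 * (r : ℝ) - d) * n) := by
    apply johnson_aux n hn q hq hNZ d hd r hr B y _ _ hQa2 hP
    · intro c hc c' hc' hne
      exact hdist c (hCfin.mem_toFinset.1 (Finset.mem_filter.1 hc).1)
        c' (hCfin.mem_toFinset.1 (Finset.mem_filter.1 hc').1) hne
    · intro c hc
      exact (Finset.mem_filter.1 hc).2
  -- assemble
  have hCcard : (Nat.card C : ℝ) = Ct.card := by
    rw [Nat.card_coe_set_eq, Set.ncard_eq_toFinset_card C hCfin]
  have hVcard : (Nat.card (∀ i, ZMod (q i)) : ℝ) = Fintype.card (∀ i, ZMod (q i)) := by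
    rw [Nat.card_eq_fintype_card]
  rw [hCcard, hVcard]
  have hsph0 : (0:ℝ) < sph q r := by exact_mod_cast hsph_pos
  have h3 : (Ct.card : ℝ) ≤ (Fintype.card (∀ i, ZMod (q i)) : ℝ) / sph q r * M := by
    rw [div_mul_eq_mul_div, le_div_iff₀ hsph0]
    exact_mod_cast havg
  calc (Ct.card : ℝ) ≤ (Fintype.card (∀ i, ZMod (q i)) : ℝ) / sph q r * M := h3
  _ ≤ _ := by
      apply mul_le_mul_of_nonneg_left hJ
      positivity
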